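/- (Spectral core of Theorem 2.) Let X and Y be disjoint finite sets of oracles x : Fin N → Bool, let R ⊆ X × Y be a relation, and let Γ be the real symmetric matrix on (X ∪ Y) × (X ∪ Y) with Γ_{xy} = 1 if (x,y) ∈ R or (y,x) ∈ R and Γ_{xy} = 0 otherwise. For each tuple (i₁,…,i_p) ∈ (Fin N)^p, set R^{i₁⋯i_p} = {(x,y) ∈ R : x_{i_j} ≠ y_{i_j} for some j}. Suppose every x ∈ X is related by R to at least h elements of Y, every y ∈ Y is related by R to at least h' elements of X, and for every tuple (i₁,…,i_p) every x ∈ X is related by R^{i₁⋯i_p} to at most ℓ elements and every y ∈ Y to at most ℓ' elements, with h, h', ℓ, ℓ' ≥ 1. Then λ(Γ) / (max over tuples (i₁,…,i_p) of λ(Γ^{i₁⋯i_p})) ≥ √(h·h' / (ℓ·ℓ')). -/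

import Mathlib

open RealInnerProductSpace

/-- The spectral norm (operator 2-norm) of a matrix over `𝕜`. -/
noncomputable def specNorm {𝕜 : Type*} [RCLike 𝕜] {m n : Type*} [Fintype m] [Fintype n]
    [DecidableEq n] (A : Matrix m n 𝕜) : ℝ :=
  ‖LinearMap.toContinuousLinearMap (Matrix.toEuclideanLin A)‖

lemma specNorm_ge_bilin {n : Type*} [Fintype n] [DecidableEq n]
    (A : Matrix n n ℝ) (u v : n → ℝ) :
    ∑ x, ∑ y, u x * A x y * v y ≤
      specNorm A * Real.sqrt (∑ x, u x ^ 2) * Real.sqrt (∑ y, v y ^ 2) := by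
  set T := LinearMap.toContinuousLinearMap (Matrix.toEuclideanLin A)
  set U : EuclideanSpace ℝ n := (WithLp.equiv 2 _).symm u
  set V : EuclideanSpace ℝ n := (WithLp.equiv 2 _).symm v
  have hUnorm : ‖U‖ = Real.sqrt (∑ x, u x ^ 2) := by
    rw [EuclideanSpace.norm_eq]
    congr 1; apply Finset.sum_congr rfl; intro x _
    rw [Real.norm_eq_abs, sq_abs]; rfl
  have hVnorm : ‖V‖ = Real.sqrt (∑ x, v x ^ 2) := by
    rw [EuclideanSpace.norm_eq]
    congr 1; apply Finset.sum_congr rfl; intro x _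
    rw [Real.norm_eq_abs, sq_abs]; rfl
  have hinner : (inner ℝ U (T V) : ℝ) = ∑ x, ∑ y, u x * A x y * v y := by
    rw [PiLp.inner_apply]
    apply Finset.sum_congr rfl; intro x _
    have : T V x = ∑ y, A x y * v y := by
      simp [T, Matrix.toEuclideanLin_apply, Matrix.mulVec, dotProduct]
      rfl
    rw [this, RCLike.inner_apply]
    simp [Finset.mul_sum, mul_assoc]
    change (∑ y, A x y * v y) * u x = _
    rw [Finset.sum_mul]; exact Finset.sum_congr rfl fun y _ => by ring
  calc ∑ x, ∑ y, u x * A x y * v y = (inner ℝ U (T V) : ℝ) := hinner.symm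
    _ ≤ ‖U‖ * ‖T V‖ := real_inner_le_norm _ _
    _ ≤ ‖U‖ * (‖T‖ * ‖V‖) := by
        apply mul_le_mul_of_nonneg_left (T.le_opNorm V) (norm_nonneg _)
    _ = specNorm A * Real.sqrt (∑ x, u x ^ 2) * Real.sqrt (∑ y, v y ^ 2) := by
        rw [hUnorm, hVnorm, specNorm]; ring

lemma specNorm_le_schur {n : Type*} [Fintype n] [DecidableEq n]
    (A : Matrix n n ℝ) (hA : ∀ x y, 0 ≤ A x y) (C : ℝ) (hC : 0 ≤ C)
    (hbound : ∀ y, ∑ x, (∑ z, A x z) * A x y ≤ C) :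
    specNorm A ≤ Real.sqrt C := by
  apply ContinuousLinearMap.opNorm_le_bound _ (Real.sqrt_nonneg C)
  intro V
  set v : n → ℝ := fun y => V y with hv
  have hTV : ∀ x, Matrix.toEuclideanLin A V x = ∑ y, A x y * v y := by
    intro x
    simp [Matrix.toEuclideanLin_apply, Matrix.mulVec, dotProduct]
    rfl
  have key : ∑ x, (∑ y, A x y * v y) ^ 2 ≤ C * ∑ y, v y ^ 2 := by
    have step1 : ∀ x, (∑ y, A x y * v y) ^ 2 ≤
        (∑ y, A x y) * ∑ y, A x y * v y ^ 2 := by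
      intro x
      have := Finset.sum_mul_sq_le_sq_mul_sq Finset.univ
        (fun y => Real.sqrt (A x y)) (fun y => Real.sqrt (A x y) * v y)
      have e1 : ∀ y, Real.sqrt (A x y) * (Real.sqrt (A x y) * v y) = A x y * v y := by
        intro y; rw [← mul_assoc, Real.mul_self_sqrt (hA x y)]
      have e2 : ∀ y, Real.sqrt (A x y) ^ 2 = A x y := fun y => Real.sq_sqrt (hA x y)
      have e3 : ∀ y, (Real.sqrt (A x y) * v y) ^ 2 = A x y * v y ^ 2 := by
        intro y; rw [mul_pow, e2]
      simp only [e1, e2, e3] at this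
      exact this
    calc ∑ x, (∑ y, A x y * v y) ^ 2
        ≤ ∑ x, (∑ y, A x y) * ∑ y, A x y * v y ^ 2 :=
          Finset.sum_le_sum fun x _ => step1 x
      _ = ∑ y, (∑ x, (∑ z, A x z) * A x y) * v y ^ 2 := by
          simp_rw [Finset.mul_sum]
          rw [Finset.sum_comm]
          apply Finset.sum_congr rfl; intro y _
          rw [Finset.sum_mul]
          apply Finset.sum_congr rfl; intro x _; ring
      _ ≤ ∑ y, C * v y ^ 2 :=
          Finset.sum_le_sum fun y _ => mul_le_mul_of_nonneg_right (hbound y) (sq_nonneg _)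
      _ = C * ∑ y, v y ^ 2 := by rw [Finset.mul_sum]
  have hVnorm : ‖V‖ = Real.sqrt (∑ y, v y ^ 2) := by
    rw [EuclideanSpace.norm_eq]
    congr 1; apply Finset.sum_congr rfl; intro x _
    rw [Real.norm_eq_abs, sq_abs]
  have hTVnorm : ‖LinearMap.toContinuousLinearMap (Matrix.toEuclideanLin A) V‖
      = Real.sqrt (∑ x, (∑ y, A x y * v y) ^ 2) := by
    rw [EuclideanSpace.norm_eq]
    congr 1; apply Finset.sum_congr rfl; intro x _
    rw [Real.norm_eq_abs, sq_abs]
    congr 1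
  rw [hTVnorm, hVnorm, ← Real.sqrt_mul hC]
  exact Real.sqrt_le_sqrt key

lemma sum_ind {α : Type*} (S : Finset α) (P : α → Prop) [DecidablePred P] (c : ℝ) :
    ∑ a : ↥S, (if P ↑a then c else 0) = ((S.filter P).card : ℝ) * c := by
  rw [Finset.sum_coe_sort S (fun a => if P a then c else 0), ← Finset.sum_filter,
    Finset.sum_const, nsmul_eq_mul]

/-- **Spectral core of the combinatorial parallel adversary bound.**
For the 0-1 adversary matrix `Γ` of a relation `R ⊆ X × Y` with minimum degrees `h, h'`
and maximum degrees `ℓ, ℓ'` of the zeroed-out relations `R^{i₁⋯i_p}`, the spectral ratio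
`λ(Γ) / max_{i₁,…,i_p} λ(Γ^{i₁⋯i_p})` is at least `√(h·h'/(ℓ·ℓ'))`. -/
theorem spectral_adversary_ratio_bound
    {N p : ℕ} (hp : 1 ≤ p)
    (X Y : Finset (Fin N → Bool)) (hXY : Disjoint X Y)
    (hX : X.Nonempty) (hY : Y.Nonempty)
    (R : Finset ((Fin N → Bool) × (Fin N → Bool)))
    (hR : ∀ r ∈ R, r.1 ∈ X ∧ r.2 ∈ Y)
    (h h' ℓ ℓ' : ℕ) (hh : 1 ≤ h) (hh' : 1 ≤ h') (hℓ : 1 ≤ ℓ) (hℓ' : 1 ≤ ℓ')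
    (hrow : ∀ a ∈ X, h ≤ (Y.filter fun b => (a, b) ∈ R).card)
    (hcol : ∀ b ∈ Y, h' ≤ (X.filter fun a => (a, b) ∈ R).card)
    (hrow' : ∀ i : Fin p → Fin N, ∀ a ∈ X,
      (Y.filter fun b => (a, b) ∈ R ∧ ∃ j, a (i j) ≠ b (i j)).card ≤ ℓ)
    (hcol' : ∀ i : Fin p → Fin N, ∀ b ∈ Y,
      (X.filter fun a => (a, b) ∈ R ∧ ∃ j, a (i j) ≠ b (i j)).card ≤ ℓ')
    (Γ : Matrix ↥(X ∪ Y) ↥(X ∪ Y) ℝ)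
    (hΓ : ∀ a b : ↥(X ∪ Y),
      Γ a b = if ((a : Fin N → Bool), (b : Fin N → Bool)) ∈ R ∨
                 ((b : Fin N → Bool), (a : Fin N → Bool)) ∈ R then 1 else 0) :
    Real.sqrt ((h * h' : ℝ) / (ℓ * ℓ')) ≤
      specNorm Γ /
        ⨆ i : Fin p → Fin N,
          specNorm (Matrix.of fun a b : ↥(X ∪ Y) =>
            if ∃ j, (a : Fin N → Bool) (i j) ≠ (b : Fin N → Bool) (i j) then Γ a b else 0) := by
  classical
  have hd : ∀ x ∈ X, x ∉ Y := fun x hx hy => (Finset.disjoint_left.mp hXY hx) hy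
  have hN : 0 < N := by
    by_contra hN0
    push_neg at hN0
    obtain ⟨x, hx⟩ := hX; obtain ⟨y, hy⟩ := hY
    have hxy : x = y := funext fun i => absurd i.2 (by omega)
    exact hd x hx (hxy ▸ hy)
  have hNe : Nonempty (Fin p → Fin N) := ⟨fun _ => ⟨0, hN⟩⟩
  -- membership facts
  have hmem : ∀ a : ↥(X ∪ Y), (↑a : Fin N → Bool) ∈ X ∨ (↑a : Fin N → Bool) ∈ Y := by
    intro a; have := a.2; rwa [Finset.mem_union] at this
  -- LOWER BOUND
  have hfX : (X ∪ Y).filter (fun x => x ∈ X) = X := by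
    ext a; simp only [Finset.mem_filter, Finset.mem_union]; tauto
  have hfY : (X ∪ Y).filter (fun x => x ∈ Y) = Y := by
    ext a; simp only [Finset.mem_filter, Finset.mem_union]; tauto
  have hlow : Real.sqrt ((h : ℝ) * h') ≤ specNorm Γ := by
    set u : ↥(X ∪ Y) → ℝ := fun a => if (↑a : Fin N → Bool) ∈ X then 1 else 0 with hu
    set w : ↥(X ∪ Y) → ℝ := fun b => if (↑b : Fin N → Bool) ∈ Y then 1 else 0 with hw
    have husq : ∑ a : ↥(X ∪ Y), u a ^ 2 = (X.card : ℝ) := by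
      calc ∑ a : ↥(X ∪ Y), u a ^ 2
          = ∑ a : ↥(X ∪ Y), (if (↑a : Fin N → Bool) ∈ X then (1:ℝ) else 0) :=
            Finset.sum_congr rfl fun a _ => by
              by_cases hax : (↑a : Fin N → Bool) ∈ X <;> simp [hu, hax]
        _ = (((X ∪ Y).filter fun x => x ∈ X).card : ℝ) := by
            simpa using sum_ind (X ∪ Y) (fun x => x ∈ X) 1
        _ = (X.card : ℝ) := by rw [hfX]
    have hwsq : ∑ a : ↥(X ∪ Y), w a ^ 2 = (Y.card : ℝ) := by
      calc ∑ a : ↥(X ∪ Y), w a ^ 2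
          = ∑ a : ↥(X ∪ Y), (if (↑a : Fin N → Bool) ∈ Y then (1:ℝ) else 0) :=
            Finset.sum_congr rfl fun a _ => by
              by_cases hax : (↑a : Fin N → Bool) ∈ Y <;> simp [hw, hax]
        _ = (((X ∪ Y).filter fun x => x ∈ Y).card : ℝ) := by
            simpa using sum_ind (X ∪ Y) (fun x => x ∈ Y) 1
        _ = (Y.card : ℝ) := by rw [hfY]
    have hterm : ∀ a b : ↥(X ∪ Y), u a * Γ a b * w b =
        if ((↑a : Fin N → Bool), (↑b : Fin N → Bool)) ∈ R then (1:ℝ) else 0 := by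
      intro a b
      rw [hΓ]
      by_cases hr : ((↑a : Fin N → Bool), (↑b : Fin N → Bool)) ∈ R
      · have hm := hR _ hr
        simp [hu, hw, hr, hm.1, hm.2]
      · simp only [hr, if_false]
        by_cases hr2 : ((↑b : Fin N → Bool), (↑a : Fin N → Bool)) ∈ R
        · have hm := hR _ hr2
          have ha : (↑a : Fin N → Bool) ∉ X := fun hc => hd _ hc hm.2
          simp [hu, ha]
        · simp [hr, hr2]
    set L : ℝ := ∑ a : ↥(X ∪ Y),
        ((((X ∪ Y).filter fun b => ((↑a : Fin N → Bool), b) ∈ R).card : ℝ)) with hL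
    have hbilL : ∑ a : ↥(X ∪ Y), ∑ b : ↥(X ∪ Y), u a * Γ a b * w b = L := by
      apply Finset.sum_congr rfl; intro a _
      rw [Finset.sum_congr rfl (fun b _ => hterm a b)]
      simpa using sum_ind (X ∪ Y) (fun b => ((↑a : Fin N → Bool), b) ∈ R) 1
    have hL1 : (h : ℝ) * X.card ≤ L := by
      have step : ∀ a : ↥(X ∪ Y),
          (if (↑a : Fin N → Bool) ∈ X then (h:ℝ) else 0) ≤
          ((((X ∪ Y).filter fun b => ((↑a : Fin N → Bool), b) ∈ R).card : ℝ)) := by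
        intro a
        by_cases hax : (↑a : Fin N → Bool) ∈ X
        · simp only [hax, if_true]
          have hsub : (Y.filter fun b => ((↑a : Fin N → Bool), b) ∈ R) ⊆
              ((X ∪ Y).filter fun b => ((↑a : Fin N → Bool), b) ∈ R) :=
            Finset.filter_subset_filter _ Finset.subset_union_right
          exact_mod_cast le_trans (hrow _ hax) (Finset.card_le_card hsub)
        · simp only [hax, if_false]
          positivity
      calc (h : ℝ) * X.card
          = ∑ a : ↥(X ∪ Y), (if (↑a : Fin N → Bool) ∈ X then (h:ℝ) else 0) := by
            rw [show ∑ a : ↥(X ∪ Y), (if (↑a : Fin N → Bool) ∈ X then (h:ℝ) else 0)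
                = (((X ∪ Y).filter fun x => x ∈ X).card : ℝ) * (h:ℝ) from
              sum_ind (X ∪ Y) (fun x => x ∈ X) (h:ℝ), hfX, mul_comm]
        _ ≤ L := Finset.sum_le_sum fun a _ => step a
    have hL2 : (h' : ℝ) * Y.card ≤ L := by
      have hLswap : L = ∑ b : ↥(X ∪ Y),
          ((((X ∪ Y).filter fun a => (a, (↑b : Fin N → Bool)) ∈ R).card : ℝ)) := by
        rw [hL]
        rw [show (∑ a : ↥(X ∪ Y),
            ((((X ∪ Y).filter fun b => ((↑a : Fin N → Bool), b) ∈ R).card : ℝ)))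
          = ∑ a : ↥(X ∪ Y), ∑ b : ↥(X ∪ Y),
              (if ((↑a : Fin N → Bool), (↑b : Fin N → Bool)) ∈ R then (1:ℝ) else 0) from
          (Finset.sum_congr rfl fun a _ => by
            simpa using (sum_ind (X ∪ Y) (fun b => ((↑a : Fin N → Bool), b) ∈ R) 1).symm)]
        rw [Finset.sum_comm]
        apply Finset.sum_congr rfl; intro b _
        simpa using sum_ind (X ∪ Y) (fun a => (a, (↑b : Fin N → Bool)) ∈ R) 1
      rw [hLswap]
      have step : ∀ b : ↥(X ∪ Y),
          (if (↑b : Fin N → Bool) ∈ Y then (h':ℝ) else 0) ≤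
          ((((X ∪ Y).filter fun a => (a, (↑b : Fin N → Bool)) ∈ R).card : ℝ)) := by
        intro b
        by_cases hbx : (↑b : Fin N → Bool) ∈ Y
        · simp only [hbx, if_true]
          have hsub : (X.filter fun a => (a, (↑b : Fin N → Bool)) ∈ R) ⊆
              ((X ∪ Y).filter fun a => (a, (↑b : Fin N → Bool)) ∈ R) :=
            Finset.filter_subset_filter _ Finset.subset_union_left
          exact_mod_cast le_trans (hcol _ hbx) (Finset.card_le_card hsub)
        · simp only [hbx, if_false]
          positivity
      calc (h' : ℝ) * Y.card
          = ∑ b : ↥(X ∪ Y), (if (↑b : Fin N → Bool) ∈ Y then (h':ℝ) else 0) := by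
            rw [show ∑ b : ↥(X ∪ Y), (if (↑b : Fin N → Bool) ∈ Y then (h':ℝ) else 0)
                = (((X ∪ Y).filter fun x => x ∈ Y).card : ℝ) * (h':ℝ) from
              sum_ind (X ∪ Y) (fun x => x ∈ Y) (h':ℝ), hfY, mul_comm]
        _ ≤ _ := Finset.sum_le_sum fun b _ => step b
    have hbil := specNorm_ge_bilin Γ u w
    rw [hbilL, husq, hwsq] at hbil
    have hLnn : (0:ℝ) ≤ (h:ℝ) * X.card := by positivity
    have hXpos : (0:ℝ) < X.card := by exact_mod_cast Finset.card_pos.mpr hX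
    have hYpos : (0:ℝ) < Y.card := by exact_mod_cast Finset.card_pos.mpr hY
    have hsq : Real.sqrt ((h:ℝ) * h') * (Real.sqrt (X.card : ℝ) * Real.sqrt (Y.card : ℝ)) ≤ L := by
      have e : Real.sqrt ((h:ℝ) * h') * (Real.sqrt (X.card : ℝ) * Real.sqrt (Y.card : ℝ))
          = Real.sqrt (((h:ℝ) * X.card) * ((h':ℝ) * Y.card)) := by
        rw [← Real.sqrt_mul (by positivity), ← Real.sqrt_mul (by positivity)]
        ring_nf
      rw [e]
      have hmm : ((h:ℝ) * X.card) * ((h':ℝ) * Y.card) ≤ L * L :=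
        mul_le_mul hL1 hL2 (by positivity) (le_trans hLnn hL1)
      calc Real.sqrt (((h:ℝ) * X.card) * ((h':ℝ) * Y.card)) ≤ Real.sqrt (L * L) :=
            Real.sqrt_le_sqrt hmm
        _ = L := Real.sqrt_mul_self (le_trans hLnn hL1)
    have hfin : Real.sqrt ((h:ℝ) * h') * (Real.sqrt (X.card : ℝ) * Real.sqrt (Y.card : ℝ)) ≤
        specNorm Γ * (Real.sqrt (X.card : ℝ) * Real.sqrt (Y.card : ℝ)) := by
      refine le_trans hsq (le_trans hbil ?_)
      rw [mul_assoc]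
    have hcpos : (0:ℝ) < Real.sqrt (X.card : ℝ) * Real.sqrt (Y.card : ℝ) := by
      apply mul_pos <;> exact Real.sqrt_pos.mpr (by assumption)
    exact le_of_mul_le_mul_right (by simpa [mul_comm] using hfin) hcpos
  -- UPPER BOUND (per tuple)
  have hup : ∀ i : Fin p → Fin N,
      specNorm (Matrix.of fun a b : ↥(X ∪ Y) =>
        if ∃ j, (a : Fin N → Bool) (i j) ≠ (b : Fin N → Bool) (i j) then Γ a b else 0)
      ≤ Real.sqrt ((ℓ : ℝ) * ℓ') := by
    intro i
    set A : Matrix ↥(X ∪ Y) ↥(X ∪ Y) ℝ := Matrix.of fun a b : ↥(X ∪ Y) =>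
      if ∃ j, (a : Fin N → Bool) (i j) ≠ (b : Fin N → Bool) (i j) then Γ a b else 0 with hA
    have hent : ∀ a b : ↥(X ∪ Y), A a b =
        if ((((↑a : Fin N → Bool), (↑b : Fin N → Bool)) ∈ R ∨
             ((↑b : Fin N → Bool), (↑a : Fin N → Bool)) ∈ R) ∧
            ∃ j, (↑a : Fin N → Bool) (i j) ≠ (↑b : Fin N → Bool) (i j)) then (1:ℝ) else 0 := by
      intro a b
      show (if ∃ j, (↑a : Fin N → Bool) (i j) ≠ (↑b : Fin N → Bool) (i j) then Γ a b else 0) = _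
      rw [hΓ]
      by_cases h1 : ∃ j, (↑a : Fin N → Bool) (i j) ≠ (↑b : Fin N → Bool) (i j) <;>
        by_cases h2 : ((↑a : Fin N → Bool), (↑b : Fin N → Bool)) ∈ R ∨
             ((↑b : Fin N → Bool), (↑a : Fin N → Bool)) ∈ R <;>
        simp [h1, h2]
    have hnn : ∀ a b, 0 ≤ A a b := by
      intro a b; rw [hent]; split <;> norm_num
    -- row sums
    have hrs : ∀ a : ↥(X ∪ Y), ∑ c : ↥(X ∪ Y), A a c ≤
        (if (↑a : Fin N → Bool) ∈ X then (ℓ:ℝ) else (ℓ':ℝ)) := by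
      intro a
      have hsum : ∑ c : ↥(X ∪ Y), A a c =
          (((X ∪ Y).filter fun c => ((((↑a : Fin N → Bool), c) ∈ R ∨
             (c, (↑a : Fin N → Bool)) ∈ R) ∧
            ∃ j, (↑a : Fin N → Bool) (i j) ≠ c (i j))).card : ℝ) := by
        rw [Finset.sum_congr rfl (fun c _ => hent a c)]
        simpa using sum_ind (X ∪ Y) (fun c => ((((↑a : Fin N → Bool), c) ∈ R ∨
             (c, (↑a : Fin N → Bool)) ∈ R) ∧
            ∃ j, (↑a : Fin N → Bool) (i j) ≠ c (i j))) 1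
      rw [hsum]
      by_cases hax : (↑a : Fin N → Bool) ∈ X
      · simp only [hax, if_true]
        have hc := hrow' i _ hax
        refine le_trans (Nat.cast_le.mpr (le_trans (Finset.card_le_card ?_) hc)) le_rfl
        intro c hc'
        simp only [Finset.mem_filter] at hc' ⊢
        rcases hc'.2.1 with hr | hr
        · exact ⟨(hR _ hr).2, hr, hc'.2.2⟩
        · exact absurd (hR _ hr).2 (fun hy => hd _ hax hy)
      · have hay : (↑a : Fin N → Bool) ∈ Y := (hmem a).resolve_left hax
        simp only [hax, if_false]
        have hc := hcol' i _ hay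
        refine le_trans (Nat.cast_le.mpr (le_trans (Finset.card_le_card ?_) hc)) le_rfl
        intro c hc'
        simp only [Finset.mem_filter] at hc' ⊢
        rcases hc'.2.1 with hr | hr
        · exact absurd (hR _ hr).1 (fun hx => hd _ hx hay)
        · exact ⟨(hR _ hr).1, hr, hc'.2.2.imp fun j hj => hj.symm⟩
    -- column sums
    have hcs : ∀ b : ↥(X ∪ Y), ∑ a : ↥(X ∪ Y), A a b ≤
        (if (↑b : Fin N → Bool) ∈ X then (ℓ:ℝ) else (ℓ':ℝ)) := by
      intro b
      have hsum : ∑ a : ↥(X ∪ Y), A a b =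
          (((X ∪ Y).filter fun a => (((a, (↑b : Fin N → Bool)) ∈ R ∨
             ((↑b : Fin N → Bool), a) ∈ R) ∧
            ∃ j, a (i j) ≠ (↑b : Fin N → Bool) (i j))).card : ℝ) := by
        rw [Finset.sum_congr rfl (fun a _ => hent a b)]
        simpa using sum_ind (X ∪ Y) (fun a => (((a, (↑b : Fin N → Bool)) ∈ R ∨
             ((↑b : Fin N → Bool), a) ∈ R) ∧
            ∃ j, a (i j) ≠ (↑b : Fin N → Bool) (i j))) 1
      rw [hsum]
      by_cases hbx : (↑b : Fin N → Bool) ∈ X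
      · simp only [hbx, if_true]
        have hc := hrow' i _ hbx
        refine le_trans (Nat.cast_le.mpr (le_trans (Finset.card_le_card ?_) hc)) le_rfl
        intro c hc'
        simp only [Finset.mem_filter] at hc' ⊢
        rcases hc'.2.1 with hr | hr
        · exact absurd (hR _ hr).1 (fun hx => hd _ hbx ((hR _ hr).2))
        · exact ⟨(hR _ hr).2, hr, hc'.2.2.imp fun j hj => hj.symm⟩
      · have hby : (↑b : Fin N → Bool) ∈ Y := (hmem b).resolve_left hbx
        simp only [hbx, if_false]
        have hc := hcol' i _ hby
        refine le_trans (Nat.cast_le.mpr (le_trans (Finset.card_le_card ?_) hc)) le_rfl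
        intro c hc'
        simp only [Finset.mem_filter] at hc' ⊢
        rcases hc'.2.1 with hr | hr
        · exact ⟨(hR _ hr).1, hr, hc'.2.2⟩
        · exact absurd hby (hd _ (hR _ hr).1)
    have hℓr : (1:ℝ) ≤ (ℓ:ℝ) := by exact_mod_cast hℓ
    have hℓ'r : (1:ℝ) ≤ (ℓ':ℝ) := by exact_mod_cast hℓ'
    apply specNorm_le_schur A hnn _ (by positivity)
    intro b
    by_cases hbx : (↑b : Fin N → Bool) ∈ X
    · -- nonzero entries A a b require ↑a ∈ Y, row sums ≤ ℓ'
      have hterm : ∀ a : ↥(X ∪ Y), (∑ z, A a z) * A a b ≤ (ℓ':ℝ) * A a b := by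
        intro a
        by_cases hay : (↑a : Fin N → Bool) ∈ Y
        · refine mul_le_mul_of_nonneg_right (le_trans (hrs a) ?_) (hnn a b)
          have hax : (↑a : Fin N → Bool) ∉ X := fun hc => hd _ hc hay
          simp [hax]
        · have hax : (↑a : Fin N → Bool) ∈ X := (hmem a).resolve_right hay
          have hz : A a b = 0 := by
            rw [hent, if_neg]
            rintro ⟨hr | hr, -⟩
            · exact hd _ hbx (hR _ hr).2
            · exact hay (hR _ hr).2
          rw [hz, mul_zero, mul_zero]
      calc ∑ a : ↥(X ∪ Y), (∑ z, A a z) * A a b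
          ≤ ∑ a : ↥(X ∪ Y), (ℓ':ℝ) * A a b := Finset.sum_le_sum fun a _ => hterm a
        _ = (ℓ':ℝ) * ∑ a : ↥(X ∪ Y), A a b := (Finset.mul_sum _ _ _).symm
        _ ≤ (ℓ':ℝ) * (ℓ:ℝ) := by
            refine mul_le_mul_of_nonneg_left ?_ (by positivity)
            have := hcs b
            simpa [hbx] using this
        _ = (ℓ:ℝ) * (ℓ':ℝ) := mul_comm _ _
    · have hby : (↑b : Fin N → Bool) ∈ Y := (hmem b).resolve_left hbx
      have hterm : ∀ a : ↥(X ∪ Y), (∑ z, A a z) * A a b ≤ (ℓ:ℝ) * A a b := by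
        intro a
        by_cases hax : (↑a : Fin N → Bool) ∈ X
        · refine mul_le_mul_of_nonneg_right (le_trans (hrs a) ?_) (hnn a b)
          simp [hax]
        · have hay : (↑a : Fin N → Bool) ∈ Y := (hmem a).resolve_left hax
          have hz : A a b = 0 := by
            rw [hent, if_neg]
            rintro ⟨hr | hr, -⟩
            · exact hax (hR _ hr).1
            · exact hbx (hR _ hr).1
          rw [hz, mul_zero, mul_zero]
      calc ∑ a : ↥(X ∪ Y), (∑ z, A a z) * A a b
          ≤ ∑ a : ↥(X ∪ Y), (ℓ:ℝ) * A a b := Finset.sum_le_sum fun a _ => hterm a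
        _ = (ℓ:ℝ) * ∑ a : ↥(X ∪ Y), A a b := (Finset.mul_sum _ _ _).symm
        _ ≤ (ℓ:ℝ) * (ℓ':ℝ) := by
            refine mul_le_mul_of_nonneg_left ?_ (by positivity)
            have := hcs b
            simpa [hbx] using this
  -- POSITIVITY of the sup
  have hMpos : (0:ℝ) < ⨆ i : Fin p → Fin N,
      specNorm (Matrix.of fun a b : ↥(X ∪ Y) =>
        if ∃ j, (a : Fin N → Bool) (i j) ≠ (b : Fin N → Bool) (i j) then Γ a b else 0) := by
    obtain ⟨x, hx⟩ := hX
    have hcard : 0 < (Y.filter fun b => (x, b) ∈ R).card := lt_of_lt_of_le hh (hrow x hx)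
    obtain ⟨y, hy⟩ := Finset.card_pos.mp hcard
    rw [Finset.mem_filter] at hy
    obtain ⟨hyY, hxyR⟩ := hy
    have hxy : x ≠ y := fun e => hd x hx (e ▸ hyY)
    have hdiff : ∃ i₀, x i₀ ≠ y i₀ := by
      by_contra hc; push_neg at hc; exact hxy (funext hc)
    obtain ⟨i₀, hi₀⟩ := hdiff
    have key : ∀ ι : Fin p → Fin N, ι = (fun _ => i₀) → (0:ℝ) <
        specNorm (Matrix.of fun a b : ↥(X ∪ Y) =>
          if ∃ j, (a : Fin N → Bool) (ι j) ≠ (b : Fin N → Bool) (ι j) then Γ a b else 0) := by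
      intro ι hι
      set x' : ↥(X ∪ Y) := ⟨x, Finset.mem_union_left _ hx⟩ with hx'
      set y' : ↥(X ∪ Y) := ⟨y, Finset.mem_union_right _ hyY⟩ with hy'
      set A : Matrix ↥(X ∪ Y) ↥(X ∪ Y) ℝ := Matrix.of fun a b : ↥(X ∪ Y) =>
        if ∃ j, (a : Fin N → Bool) (ι j) ≠ (b : Fin N → Bool) (ι j) then Γ a b else 0 with hAdef
      have hxy1 : A x' y' = 1 := by
        show (if ∃ j, x (ι j) ≠ y (ι j) then Γ x' y' else 0) = 1
        rw [if_pos ⟨⟨0, hp⟩, by rw [hι]; exact hi₀⟩, hΓ, if_pos (Or.inl hxyR)]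
      have hb := specNorm_ge_bilin A (fun a => if a = x' then (1:ℝ) else 0)
        (fun b => if b = y' then (1:ℝ) else 0)
      have e1 : ∑ a : ↥(X ∪ Y), ∑ b : ↥(X ∪ Y), (if a = x' then (1:ℝ) else 0) * A a b *
          (if b = y' then (1:ℝ) else 0) = A x' y' := by
        simp [ite_mul, mul_ite, zero_mul, mul_zero, one_mul, mul_one,
          Finset.sum_ite_eq', Finset.mem_univ]
      have e2 : ∑ a : ↥(X ∪ Y), (if a = x' then (1:ℝ) else 0) ^ 2 = 1 := by
        have : ∀ a : ↥(X ∪ Y), (if a = x' then (1:ℝ) else 0) ^ 2 =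
            (if a = x' then (1:ℝ) else 0) := by
          intro a; split <;> norm_num
        rw [Finset.sum_congr rfl fun a _ => this a]
        simp [Finset.sum_ite_eq', Finset.mem_univ]
      have e3 : ∑ a : ↥(X ∪ Y), (if a = y' then (1:ℝ) else 0) ^ 2 = 1 := by
        have : ∀ a : ↥(X ∪ Y), (if a = y' then (1:ℝ) else 0) ^ 2 =
            (if a = y' then (1:ℝ) else 0) := by
          intro a; split <;> norm_num
        rw [Finset.sum_congr rfl fun a _ => this a]
        simp [Finset.sum_ite_eq', Finset.mem_univ]
      rw [e1, e2, e3, hxy1, Real.sqrt_one, mul_one, mul_one] at hb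
      exact lt_of_lt_of_le one_pos hb
    have hk := key (fun _ => i₀) rfl
    calc (0:ℝ) < _ := hk
      _ ≤ _ := le_ciSup (f := fun i : Fin p → Fin N =>
          specNorm (Matrix.of fun a b : ↥(X ∪ Y) =>
            if ∃ j, (a : Fin N → Bool) (i j) ≠ (b : Fin N → Bool) (i j) then Γ a b else 0))
        (Set.Finite.bddAbove (Set.finite_range _)) (fun _ => i₀)
  rw [le_div_iff₀ hMpos]
  have hMub := ciSup_le hup
  calc Real.sqrt ((h * h' : ℝ) / (ℓ * ℓ')) * _
      ≤ Real.sqrt ((h * h' : ℝ) / (ℓ * ℓ')) * Real.sqrt ((ℓ : ℝ) * ℓ') :=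
        mul_le_mul_of_nonneg_left hMub (Real.sqrt_nonneg _)
    _ = Real.sqrt ((h * h' : ℝ) / (ℓ * ℓ') * ((ℓ : ℝ) * ℓ')) :=
        (Real.sqrt_mul (by positivity) _).symm
    _ = Real.sqrt ((h : ℝ) * h') := by
        rw [div_mul_cancel₀]
        have : (0:ℝ) < (ℓ : ℝ) * ℓ' := by
          have : (1:ℝ) ≤ (ℓ:ℝ) := by exact_mod_cast hℓ
          have : (1:ℝ) ≤ (ℓ':ℝ) := by exact_mod_cast hℓ'
          positivity
        exact ne_of_gt this
    _ ≤ specNorm Γ := hlow
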